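/- Let M be a module over the ring R₀ = ∏_{F ∈ 𝓕} ℚ (product over a countably infinite index set 𝓕). For a subset U ⊆ 𝓕 let e_U denote the idempotent of R₀ with support U, and define e_G M = colim_U e_U M, the colimit over cofinite subsets U of 𝓕 ordered by reverse inclusion. If e_{{F}} M = 0 for all F ∈ 𝓕 and e_G M = 0, then M = 0. -/

import Mathlib

/-- The idempotent of `∏_{F ∈ ι} ℚ` with support `U`. -/
noncomputable def eU {ι : Type} (U : Set ι) : ι → ℚ :=
  Set.indicator U (fun _ => (1 : ℚ))

/-- If `M` is a module over `R₀ = ∏_{F ∈ 𝓕} ℚ` (𝓕 countably infinite) with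
`e_{{F}} M = 0` for all `F` and `e_G M = colim_{U cofinite} e_U M = 0`
(i.e. every element is killed by some cofinite idempotent), then `M = 0`. -/
theorem stmt0 (ι : Type) [Countable ι] [Infinite ι]
    (M : Type) [AddCommGroup M] [Module (ι → ℚ) M]
    (h1 : ∀ (F : ι) (m : M), eU {F} • m = 0)
    (h2 : ∀ m : M, ∃ U : Set ι, Uᶜ.Finite ∧ eU U • m = 0) :
    ∀ m : M, m = 0 := by
  intro m
  obtain ⟨U, hUc, hU⟩ := h2 m
  have hfin : ∀ (S : Set ι), S.Finite → eU S • m = 0 := by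
    intro S hS
    refine Set.Finite.induction_on S hS ?_ ?_
    · have : eU (∅ : Set ι) = 0 := by
        funext x; simp [eU]
      rw [this, zero_smul]
    · intro a s ha _hfin ih
      have hsplit : eU (insert a s) = eU {a} + eU s := by
        funext x
        by_cases hx : x = a
        · subst hx
          simp [eU, Set.indicator, ha]
        · by_cases hxs : x ∈ s <;> simp [eU, Set.indicator, hx, hxs]
      rw [hsplit, add_smul, h1, ih, add_zero]
  have hcomp : eU U + eU Uᶜ = (1 : ι → ℚ) := by
    funext x
    by_cases hx : x ∈ U <;> simp [eU, Set.indicator, hx]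
  calc m = (1 : ι → ℚ) • m := (one_smul _ m).symm
    _ = eU U • m + eU Uᶜ • m := by rw [← hcomp, add_smul]
    _ = 0 := by rw [hU, hfin Uᶜ hUc, add_zero]
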